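/- arXiv:1212.3919 — 2 statements merged into one kernel-verified Lean document; each statement's English description precedes it below -/
import Mathlib

section
/- Let a > 0, x, y nonnegative C¹ functions and D ≥ 0 satisfying (d/dt)(x² + y²) + D ≤ a(x² + y² + √(2(x² + y²)))D. If x(0)² + y(0)² + √(2(x(0)² + y(0)²)) < 1/a, then t ↦ x(t)² + y(t)² is nonincreasing on [0,∞). -/
/-- Variant of the nonlinear Gronwall lemma: if
`(x² + y²)' + D ≤ a (x² + y² + √(2(x² + y²))) D` on `[0,∞)` with `x, y, D ≥ 0`, and
`x(0)² + y(0)² + √(2(x(0)² + y(0)²)) < 1/a`, then `t ↦ x(t)² + y(t)²` is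
nonincreasing on `[0,∞)`. -/
theorem nonlinear_gronwall_monotone
    (a : ℝ) (ha : 0 < a) (x y D : ℝ → ℝ)
    (hx : ∀ t, 0 ≤ t → 0 ≤ x t) (hy : ∀ t, 0 ≤ t → 0 ≤ y t)
    (hD : ∀ t, 0 ≤ t → 0 ≤ D t)
    (hx1 : ContDiffOn ℝ 1 x (Set.Ici 0)) (hy1 : ContDiffOn ℝ 1 y (Set.Ici 0))
    (hineq : ∀ t, 0 ≤ t →
      deriv (fun s => x s ^ 2 + y s ^ 2) t + D t ≤
        a * (x t ^ 2 + y t ^ 2 + Real.sqrt (2 * (x t ^ 2 + y t ^ 2))) * D t)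
    (h0 : x 0 ^ 2 + y 0 ^ 2 + Real.sqrt (2 * (x 0 ^ 2 + y 0 ^ 2)) < 1 / a) :
    AntitoneOn (fun t => x t ^ 2 + y t ^ 2) (Set.Ici 0) := by
  set u : ℝ → ℝ := fun t => x t ^ 2 + y t ^ 2 with hu
  have hdx : ∀ t : ℝ, 0 < t → DifferentiableAt ℝ x t := fun t ht =>
    (hx1.contDiffAt (Ici_mem_nhds ht)).differentiableAt one_ne_zero
  have hdy : ∀ t : ℝ, 0 < t → DifferentiableAt ℝ y t := fun t ht =>
    (hy1.contDiffAt (Ici_mem_nhds ht)).differentiableAt one_ne_zero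
  have hdu : ∀ t : ℝ, 0 < t → DifferentiableAt ℝ u t := fun t ht =>
    ((hdx t ht).pow 2).add ((hdy t ht).pow 2)
  have hucont : ContinuousOn u (Set.Ici 0) :=
    (hx1.continuousOn.pow 2).add (hy1.continuousOn.pow 2)
  set φ : ℝ → ℝ := fun t => u t + Real.sqrt (2 * u t) with hφ
  have hφcont : ContinuousOn φ (Set.Ici 0) :=
    hucont.add (Real.continuous_sqrt.comp_continuousOn (continuousOn_const.mul hucont))
  have hderiv_le : ∀ t, 0 ≤ t → φ t < 1 / a → deriv u t ≤ 0 := by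
    intro t ht hφt
    have h1 := hineq t ht
    have h2 : φ t * a < 1 := (lt_div_iff₀ ha).mp hφt
    have h3 := hD t ht
    simp only [hφ, hu] at h1 h2 ⊢
    nlinarith [h1, mul_nonneg (sub_nonneg.mpr h2.le) h3]
  have hφ0 : φ 0 < 1 / a := h0
  have φmono : ∀ s t : ℝ, u s ≤ u t → φ s ≤ φ t := by
    intro s t hst
    have := Real.sqrt_le_sqrt (by linarith : 2 * u s ≤ 2 * u t)
    simp only [hφ]
    linarith
  have key : ∀ t, 0 ≤ t → φ t < 1 / a := by
    by_contra h
    push_neg at h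
    obtain ⟨t₀, ht₀, hge⟩ := h
    set S : Set ℝ := Set.Ici 0 ∩ φ ⁻¹' Set.Ici (1 / a) with hS
    have hSne : S.Nonempty := ⟨t₀, ht₀, hge⟩
    have hSclosed : IsClosed S :=
      hφcont.preimage_isClosed_of_isClosed isClosed_Ici isClosed_Ici
    have hSbdd : BddBelow S := ⟨0, fun s hs => hs.1⟩
    set T := sInf S with hT
    have hTmem : T ∈ S := hSclosed.csInf_mem hSne hSbdd
    have hT0 : 0 < T := by
      rcases (Set.mem_Ici.mp hTmem.1).lt_or_eq with h' | h'
      · exact h'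
      · exact absurd (h' ▸ hTmem.2) (not_le.mpr hφ0)
    have hlt : ∀ s, 0 ≤ s → s < T → φ s < 1 / a := by
      intro s hs hsT
      by_contra hc
      exact absurd (csInf_le hSbdd ⟨hs, not_lt.mp hc⟩) (not_le.mpr hsT)
    have hanti : AntitoneOn u (Set.Icc 0 T) := by
      apply antitoneOn_of_deriv_nonpos (convex_Icc 0 T)
        (hucont.mono Set.Icc_subset_Ici_self)
      · rw [interior_Icc]
        exact fun s hs => (hdu s hs.1).differentiableWithinAt
      · rw [interior_Icc]
        exact fun s hs => hderiv_le s hs.1.le (hlt s hs.1.le hs.2)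
    have huT : u T ≤ u 0 := hanti (Set.left_mem_Icc.mpr hT0.le) ⟨hT0.le, le_rfl⟩ hT0.le
    exact absurd hTmem.2 (not_le.mpr (lt_of_le_of_lt (φmono T 0 huT) hφ0))
  apply antitoneOn_of_deriv_nonpos (convex_Ici 0) hucont
  · rw [interior_Ici]
    exact fun s hs => (hdu s hs).differentiableWithinAt
  · rw [interior_Ici]
    exact fun s hs => hderiv_le s hs.le (key s hs.le)
end

section
/- Let X : [0,T*) → [1,∞) be C¹ and A : [0,T*) → [0,∞) continuous, satisfying X'(t) ≤ C A(t) X(t) log(1 + X(t)) and A(t) ≤ C X(t) for all t < T*, for some constant C > 0. Then lim sup_{t→T*} X(t) = ∞ if and only if ∫₀^{T*} A(s) ds = ∞. -/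
open MeasureTheory

open Set Filter in
private lemma blowup_aux_bound (Tstar C : ℝ) (hT : 0 < Tstar) (hC : 0 < C) (X A : ℝ → ℝ)
    (hX1 : ∀ t ∈ Set.Ico (0:ℝ) Tstar, 1 ≤ X t)
    (hA0 : ∀ t ∈ Set.Ico (0:ℝ) Tstar, 0 ≤ A t)
    (hAc : ContinuousOn A (Set.Ico 0 Tstar))
    (hXd : ContDiffOn ℝ 1 X (Set.Ico 0 Tstar))
    (hineq : ∀ t ∈ Set.Ico (0:ℝ) Tstar,
      deriv X t ≤ C * A t * X t * Real.log (1 + X t))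
    (hI : (∫⁻ s in Set.Ico (0:ℝ) Tstar, ENNReal.ofReal (A s)) ≠ ⊤) :
    ∃ M : ℝ, ∀ t ∈ Set.Ico (0:ℝ) Tstar, X t ≤ M := by
  set I : ℝ := (∫⁻ s in Set.Ico (0:ℝ) Tstar, ENNReal.ofReal (A s)).toReal with hIdef
  have hI0 : 0 ≤ I := ENNReal.toReal_nonneg
  set G : ℝ → ℝ := fun t => Real.log (Real.log (1 + X t)) with hGdef
  set K : ℝ := G 0 + C * I with hKdef
  refine ⟨Real.exp (Real.exp K), fun t ht => ?_⟩
  -- basic positivity facts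
  have hIcoSub : ∀ {s : ℝ}, s ∈ Set.Icc (0:ℝ) t → s ∈ Set.Ico (0:ℝ) Tstar := by
    intro s hs; exact ⟨hs.1, lt_of_le_of_lt hs.2 ht.2⟩
  have h0mem : (0:ℝ) ∈ Set.Ico (0:ℝ) Tstar := ⟨le_refl 0, hT⟩
  -- the key Gronwall-type estimate: G t ≤ K
  have hGK : G t ≤ K := by
    -- F is monotone on Icc 0 t
    set F : ℝ → ℝ := fun u => C * (∫ s in (0:ℝ)..u, A s) - G u with hFdef
    have hXcont : ContinuousOn X (Set.Ico 0 Tstar) := hXd.continuousOn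
    have hpos : ∀ s ∈ Set.Ico (0:ℝ) Tstar, (0:ℝ) < 1 + X s := fun s hs => by
      have := hX1 s hs; linarith
    have hlogpos : ∀ s ∈ Set.Ico (0:ℝ) Tstar, (0:ℝ) < Real.log (1 + X s) := fun s hs =>
      Real.log_pos (by have := hX1 s hs; linarith)
    have hAInt : IntegrableOn A (Set.Icc 0 t) := by
      exact (hAc.mono fun s hs => hIcoSub hs).integrableOn_compact isCompact_Icc
    have hFc : ContinuousOn F (Set.Icc 0 t) := by
      have h1 : ContinuousOn (fun u => ∫ s in (0:ℝ)..u, A s) (Set.Icc 0 t) := by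
        have := intervalIntegral.continuousOn_primitive_interval
          (a := (0:ℝ)) (b := t) (μ := volume) (f := A)
          (by rwa [Set.uIcc_of_le ht.1])
        rwa [Set.uIcc_of_le ht.1] at this
      have hXc' : ContinuousOn X (Set.Icc 0 t) := hXcont.mono fun s hs => hIcoSub hs
      have hGc : ContinuousOn G (Set.Icc 0 t) := by
        apply ContinuousOn.log
        · apply ContinuousOn.log
          · exact continuousOn_const.add hXc'
          · intro s hs; exact ne_of_gt (hpos s (hIcoSub hs))
        · intro s hs; exact ne_of_gt (hlogpos s (hIcoSub hs))
      exact (continuousOn_const.mul h1).sub hGc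
    have hderiv : ∀ s ∈ Set.Ioo (0:ℝ) t,
        HasDerivAt F (C * A s - deriv X s / (1 + X s) / Real.log (1 + X s)) s := by
      intro s hs
      have hsmem : s ∈ Set.Ico (0:ℝ) Tstar := ⟨hs.1.le, lt_trans hs.2 ht.2⟩
      have hnhds : Set.Ico (0:ℝ) Tstar ∈ nhds s := Ico_mem_nhds hs.1 hsmem.2
      have hXs : HasDerivAt X (deriv X s) s :=
        (((hXd.differentiableOn one_ne_zero) s hsmem).differentiableAt hnhds).hasDerivAt
      have hG : HasDerivAt G (deriv X s / (1 + X s) / Real.log (1 + X s)) s := by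
        have h1 : HasDerivAt (fun u => 1 + X u) (deriv X s) s := hXs.const_add 1
        have h2 := h1.log (ne_of_gt (hpos s hsmem))
        exact h2.log (ne_of_gt (hlogpos s hsmem))
      have hP : HasDerivAt (fun u => ∫ s in (0:ℝ)..u, A s) (A s) s := by
        apply intervalIntegral.integral_hasDerivAt_right
        · apply ContinuousOn.intervalIntegrable
          apply hAc.mono
          rw [Set.uIcc_of_le hs.1.le]
          exact fun x hx => ⟨hx.1, lt_of_le_of_lt hx.2 hsmem.2⟩
        · exact ⟨Set.Ico 0 Tstar, hnhds, hAc.aestronglyMeasurable measurableSet_Ico⟩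
        · exact hAc.continuousAt hnhds
      exact (hP.const_mul C).sub hG
    have hmono : MonotoneOn F (Set.Icc 0 t) := by
      apply monotoneOn_of_deriv_nonneg (convex_Icc 0 t) hFc
      · intro s hs
        rw [interior_Icc] at hs
        exact (hderiv s hs).differentiableAt.differentiableWithinAt
      · intro s hs
        rw [interior_Icc] at hs
        rw [(hderiv s hs).deriv]
        have hsmem : s ∈ Set.Ico (0:ℝ) Tstar := ⟨hs.1.le, lt_trans hs.2 ht.2⟩
        have h1 := hineq s hsmem
        have h2 := hA0 s hsmem
        have h3 := hX1 s hsmem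
        have h4 := hpos s hsmem
        have h5 := hlogpos s hsmem
        have key : deriv X s / (1 + X s) / Real.log (1 + X s) ≤ C * A s := by
          rw [div_div, div_le_iff₀ (by positivity)]
          nlinarith [mul_nonneg (mul_nonneg hC.le h2) h5.le]
        linarith
    have hF0t : F 0 ≤ F t := hmono (Set.left_mem_Icc.2 ht.1) (Set.right_mem_Icc.2 ht.1) ht.1
    have hF0 : F 0 = -G 0 := by simp [hFdef, intervalIntegral.integral_same]
    -- bound the interval integral by I
    have hintle : (∫ s in (0:ℝ)..t, A s) ≤ I := by
      have hAInt' : IntegrableOn A (Set.Ioc 0 t) := hAInt.mono_set Set.Ioc_subset_Icc_self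
      have hnn : 0 ≤ᵐ[volume.restrict (Set.Ioc 0 t)] A := by
        rw [EventuallyLE, ae_restrict_iff' measurableSet_Ioc]
        exact Filter.Eventually.of_forall fun s hs =>
          hA0 s ⟨hs.1.le, lt_of_le_of_lt hs.2 ht.2⟩
      have heq : ENNReal.ofReal (∫ s in Set.Ioc (0:ℝ) t, A s)
          = ∫⁻ s in Set.Ioc (0:ℝ) t, ENNReal.ofReal (A s) :=
        ofReal_integral_eq_lintegral_ofReal hAInt' hnn
      have hle : (∫⁻ s in Set.Ioc (0:ℝ) t, ENNReal.ofReal (A s))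
          ≤ ∫⁻ s in Set.Ico (0:ℝ) Tstar, ENNReal.ofReal (A s) :=
        lintegral_mono_set (fun s hs => ⟨hs.1.le, lt_of_le_of_lt hs.2 ht.2⟩)
      rw [intervalIntegral.integral_of_le ht.1]
      have := ENNReal.toReal_mono hI (heq ▸ hle)
      rwa [ENNReal.toReal_ofReal (integral_nonneg_of_ae hnn)] at this
    have : -G 0 ≤ C * (∫ s in (0:ℝ)..t, A s) - G t := by rw [← hF0]; exact hF0t
    have hCint : C * (∫ s in (0:ℝ)..t, A s) ≤ C * I :=
      mul_le_mul_of_nonneg_left hintle hC.le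
    simp only [hKdef]; linarith
  -- unfold G t ≤ K into a bound on X t
  have hlp : 0 < Real.log (1 + X t) := Real.log_pos (by have := hX1 t ht; linarith)
  have h1 : Real.log (1 + X t) ≤ Real.exp K := by
    have := (Real.log_le_iff_le_exp hlp).1 hGK
    exact this
  have h2 : 1 + X t ≤ Real.exp (Real.exp K) := by
    have hp : (0:ℝ) < 1 + X t := by have := hX1 t ht; linarith
    exact (Real.log_le_iff_le_exp hp).1 h1
  linarith

open Set Filter in
/-- Abstract blow-up criterion equivalence: if `X ≥ 1` is `C¹` on `[0, T*)`, `A ≥ 0` is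
continuous, `X' ≤ C A X log(1 + X)` and `A ≤ C X`, then
`limsup_{t→T*} X(t) = ∞` if and only if `∫₀^{T*} A(s) ds = ∞`. -/
theorem blowup_criterion_equivalence
    (Tstar C : ℝ) (hT : 0 < Tstar) (hC : 0 < C) (X A : ℝ → ℝ)
    (hX1 : ∀ t ∈ Set.Ico (0:ℝ) Tstar, 1 ≤ X t)
    (hA0 : ∀ t ∈ Set.Ico (0:ℝ) Tstar, 0 ≤ A t)
    (hAc : ContinuousOn A (Set.Ico 0 Tstar))
    (hXd : ContDiffOn ℝ 1 X (Set.Ico 0 Tstar))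
    (hineq : ∀ t ∈ Set.Ico (0:ℝ) Tstar,
      deriv X t ≤ C * A t * X t * Real.log (1 + X t))
    (hAX : ∀ t ∈ Set.Ico (0:ℝ) Tstar, A t ≤ C * X t) :
    (Filter.limsup (fun t => ((X t : ℝ) : EReal)) (nhdsWithin Tstar (Set.Iio Tstar)) = ⊤)
      ↔ (∫⁻ s in Set.Ico (0:ℝ) Tstar, ENNReal.ofReal (A s) = ⊤) := by
  constructor
  · -- limsup = ⊤ → integral = ⊤
    intro hls
    by_contra hI
    obtain ⟨M, hM⟩ := blowup_aux_bound Tstar C hT hC X A hX1 hA0 hAc hXd hineq hI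
    have hmem : Set.Ioo (0:ℝ) Tstar ∈ nhdsWithin Tstar (Set.Iio Tstar) :=
      Ioo_mem_nhdsLT_of_mem ⟨hT, le_refl Tstar⟩
    have hev : ∀ᶠ u in nhdsWithin Tstar (Set.Iio Tstar),
        ((X u : ℝ) : EReal) ≤ (M : EReal) := by
      filter_upwards [hmem] with u hu
      exact_mod_cast hM u ⟨hu.1.le, hu.2⟩
    have hle : Filter.limsup (fun t => ((X t : ℝ) : EReal))
        (nhdsWithin Tstar (Set.Iio Tstar)) ≤ (M : EReal) :=
      Filter.limsup_le_of_le (by isBoundedDefault) hev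
    rw [hls] at hle
    exact absurd hle (EReal.coe_lt_top M).not_ge
  · -- integral = ⊤ → limsup = ⊤
    intro hI
    by_contra hls
    have hlt : Filter.limsup (fun t => ((X t : ℝ) : EReal))
        (nhdsWithin Tstar (Set.Iio Tstar)) < ⊤ := lt_top_iff_ne_top.2 hls
    obtain ⟨r, hr1, -⟩ := EReal.lt_iff_exists_real_btwn.1 hlt
    have hev : ∀ᶠ u in nhdsWithin Tstar (Set.Iio Tstar),
        ((X u : ℝ) : EReal) < (r : EReal) :=
      Filter.eventually_lt_of_limsup_lt hr1
    obtain ⟨l, hl, hsub⟩ := mem_nhdsLT_iff_exists_Ioo_subset.1 hev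
    set c : ℝ := max 0 l with hcdef
    have hc : c < Tstar := max_lt hT hl
    have hIccSub : Set.Icc (0:ℝ) c ⊆ Set.Ico 0 Tstar :=
      fun x hx => ⟨hx.1, lt_of_le_of_lt hx.2 hc⟩
    have hXc : ContinuousOn X (Set.Icc 0 c) := hXd.continuousOn.mono hIccSub
    obtain ⟨x0, -, hx0max⟩ := isCompact_Icc.exists_isMaxOn
      ⟨0, Set.left_mem_Icc.2 (le_max_left 0 l)⟩ hXc
    set M : ℝ := max (X x0) r with hMdef
    have hbound : ∀ u ∈ Set.Ico (0:ℝ) Tstar, X u ≤ M := by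
      intro u hu
      rcases le_or_gt u c with h | h
      · exact le_trans (hx0max ⟨hu.1, h⟩) (le_max_left _ _)
      · have hu' : u ∈ Set.Ioo l Tstar := ⟨lt_of_le_of_lt (le_max_right 0 l) h, hu.2⟩
        have := hsub hu'
        simp only [Set.mem_setOf_eq, EReal.coe_lt_coe_iff] at this
        exact le_trans this.le (le_max_right _ _)
    have hfin : (∫⁻ s in Set.Ico (0:ℝ) Tstar, ENNReal.ofReal (A s))
        ≤ ENNReal.ofReal (C * M) * ENNReal.ofReal Tstar := by
      calc (∫⁻ s in Set.Ico (0:ℝ) Tstar, ENNReal.ofReal (A s))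
          ≤ ∫⁻ _ in Set.Ico (0:ℝ) Tstar, ENNReal.ofReal (C * M) := by
            apply setLIntegral_mono measurable_const
            intro x hx
            exact ENNReal.ofReal_le_ofReal
              (le_trans (hAX x hx) (mul_le_mul_of_nonneg_left (hbound x hx) hC.le))
        _ = ENNReal.ofReal (C * M) * volume (Set.Ico (0:ℝ) Tstar) := by
            rw [setLIntegral_const]
        _ ≤ ENNReal.ofReal (C * M) * ENNReal.ofReal Tstar := by
            rw [Real.volume_Ico, sub_zero]
    rw [hI] at hfin
    exact absurd (top_le_iff.1 hfin)
      (ENNReal.mul_ne_top ENNReal.ofReal_ne_top ENNReal.ofReal_ne_top)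
end
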